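/- Fix a positive integer t and define l : ℤ_{>0} → ℝ by l(n) := (2^n/C(n−1,t)) · ((⌊n^{1/3}⌋+1)/(⌊n^{1/3}⌋+1+2t)) · (C(⌊n^{2/3}⌋+t−1, t)/C(⌊n^{2/3}⌋+⌊n^{1/3}⌋+3t−1, t)) · (1 − Σ_{0 ≤ r < ⌊n^{1/3}⌋−1+⌊n^{2/3}⌋+t} C(n−1,r)/2^{n−1} − Σ_{n−1−⌊n^{2/3}⌋+t < r ≤ n−1} C(n−1,r)/2^{n−1}). Then lim_{n→∞} l(n)·n^t/(t!·2^n) = 1. -/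

import Mathlib

open Filter Finset

/-- The number of runs of a binary sequence (maximal blocks of equal consecutive symbols). -/
def runsCount (x : List Bool) : ℕ := (x.destutter (· ≠ ·)).length

/-- The deletion sphere `dS^t(x)`: all sequences obtained from `x` by deleting `t` symbols,
i.e. the sublists of `x` of length `x.length - t`. -/
def delSphere (t : ℕ) (x : List Bool) : Set (List Bool) :=
  {y | y.Sublist x ∧ y.length = x.length - t}

/-- `dS^t(X)` for a set `X` of sequences. -/
def delSphereSet (t : ℕ) (X : Set (List Bool)) : Set (List Bool) :=
  ⋃ x ∈ X, delSphere t x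

/-- A `t`-deletion code of length `n`: a set of binary sequences of length `n`
with pairwise disjoint deletion spheres. -/
def IsDeletionCode (t n : ℕ) (C : Set (List Bool)) : Prop :=
  (∀ c ∈ C, c.length = n) ∧
  ∀ c ∈ C, ∀ d ∈ C, c ≠ d → delSphere t c ∩ delSphere t d = ∅

/-- A perfect `t`-deletion code of length `n`: the deletion spheres of codewords
cover all of `𝔹^{n-t}`. -/
def IsPerfectDeletionCode (t n : ℕ) (C : Set (List Bool)) : Prop :=
  IsDeletionCode t n C ∧ delSphereSet t C = {y : List Bool | y.length = n - t}

/-- `M^t(n)`: the maximum cardinality of a `t`-deletion code of length `n`. -/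
noncomputable def maxDelCodeSize (t n : ℕ) : ℕ :=
  sSup {m : ℕ | ∃ C : Set (List Bool), IsDeletionCode t n C ∧ C.ncard = m}

section Aux
open Filter Finset Real

private lemma aux_ratio {u v : ℕ → ℝ} (hu : Tendsto u atTop atTop)
    (hv : Tendsto (fun n => v n / u n) atTop (nhds 0)) :
    Tendsto (fun n => u n / (u n + v n)) atTop (nhds 1) := by
  have h1 : Tendsto (fun n => 1 + v n / u n) atTop (nhds 1) := by
    simpa using tendsto_const_nhds.add hv
  have h2 : Tendsto (fun n => (1 + v n / u n)⁻¹) atTop (nhds 1) := by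
    simpa using h1.inv₀ one_ne_zero
  refine h2.congr' ?_
  have hpos : ∀ᶠ n in atTop, 0 < u n := hu.eventually_gt_atTop 0
  have hhalf : ∀ᶠ n in atTop, (1:ℝ)/2 < 1 + v n / u n :=
    h1.eventually (eventually_gt_nhds (by norm_num))
  filter_upwards [hpos, hhalf] with n h0 hh
  have key : 1 + v n / u n = (u n + v n) / u n := by field_simp
  have hne : u n + v n ≠ 0 := by
    intro h
    rw [key, h] at hh
    simp at hh
    linarith
  rw [key, inv_div]

private noncomputable def mf (n : ℕ) : ℕ := ⌊(n : ℝ) ^ ((1 : ℝ) / 3)⌋₊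
private noncomputable def kf (n : ℕ) : ℕ := ⌊(n : ℝ) ^ ((2 : ℝ) / 3)⌋₊

private lemma rpow_nat_atTop {e : ℝ} (he : 0 < e) :
    Tendsto (fun n : ℕ => (n : ℝ) ^ e) atTop atTop :=
  (tendsto_rpow_atTop he).comp tendsto_natCast_atTop_atTop

private lemma mf_atTop : Tendsto mf atTop atTop :=
  tendsto_nat_floor_atTop.comp (rpow_nat_atTop (by norm_num))

private lemma kf_atTop : Tendsto kf atTop atTop :=
  tendsto_nat_floor_atTop.comp (rpow_nat_atTop (by norm_num))

private lemma mf_le (n : ℕ) : (mf n : ℝ) ≤ (n : ℝ) ^ ((1 : ℝ) / 3) :=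
  Nat.floor_le (rpow_nonneg n.cast_nonneg _)

private lemma kf_le (n : ℕ) : (kf n : ℝ) ≤ (n : ℝ) ^ ((2 : ℝ) / 3) :=
  Nat.floor_le (rpow_nonneg n.cast_nonneg _)

private lemma kf_ge (n : ℕ) : (n : ℝ) ^ ((2 : ℝ) / 3) - 1 ≤ (kf n : ℝ) := by
  unfold kf
  linarith [Nat.lt_floor_add_one ((n : ℝ) ^ ((2 : ℝ) / 3))]

private lemma quot_zero (c d : ℝ) (hc : 0 ≤ c) (hd : 0 ≤ d) :
    Tendsto (fun n : ℕ => ((mf n : ℝ) + d) / ((kf n : ℝ) + c)) atTop (nhds 0) := by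
  have hub : Tendsto (fun n : ℕ =>
      2 * (n : ℝ) ^ (-(1/3) : ℝ) + (2 * d) * (n : ℝ) ^ (-(2/3) : ℝ)) atTop (nhds 0) := by
    have h1 : Tendsto (fun n : ℕ => (n : ℝ) ^ (-(1/3) : ℝ)) atTop (nhds 0) :=
      (tendsto_rpow_neg_atTop (by norm_num)).comp tendsto_natCast_atTop_atTop
    have h2 : Tendsto (fun n : ℕ => (n : ℝ) ^ (-(2/3) : ℝ)) atTop (nhds 0) :=
      (tendsto_rpow_neg_atTop (by norm_num)).comp tendsto_natCast_atTop_atTop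
    simpa using (h1.const_mul 2).add (h2.const_mul (2 * d))
  refine squeeze_zero' ?_ ?_ hub
  · filter_upwards [kf_atTop.eventually_gt_atTop 0] with n hk
    have hkc : (0:ℝ) < (kf n : ℝ) + c := by positivity
    positivity
  · have h2 : ∀ᶠ n : ℕ in atTop, (2:ℝ) ≤ (n : ℝ) ^ ((2 : ℝ) / 3) :=
      (rpow_nat_atTop (by norm_num)).eventually_ge_atTop 2
    filter_upwards [h2, eventually_ge_atTop 1] with n h2n h1n
    have hn0 : (0:ℝ) < (n : ℝ) := by exact_mod_cast h1n
    set A := (n : ℝ) ^ ((1 : ℝ) / 3) with hA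
    have hApos : 0 < A := rpow_pos_of_pos hn0 _
    have hAA : A * A = (n : ℝ) ^ ((2 : ℝ) / 3) := by
      rw [hA, ← rpow_add hn0]; norm_num
    have hnum : (mf n : ℝ) + d ≤ A + d := by linarith [mf_le n]
    have hden : A * A / 2 ≤ (kf n : ℝ) + c := by
      rw [hAA]
      linarith [kf_ge n]
    have hdpos : (0:ℝ) < A * A / 2 := by positivity
    have step : ((mf n : ℝ) + d) / ((kf n : ℝ) + c) ≤ (A + d) / (A * A / 2) := by
      apply div_le_div₀ (by positivity) hnum hdpos hden
    refine step.trans_eq ?_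
    have h13 : (n : ℝ) ^ (-(1/3) : ℝ) = A⁻¹ := by
      rw [show (-(1/3):ℝ) = -((1:ℝ)/3) by norm_num, rpow_neg hn0.le]
    have h23 : (n : ℝ) ^ (-(2/3) : ℝ) = (A*A)⁻¹ := by
      rw [show (-(2/3):ℝ) = -((2:ℝ)/3) by norm_num, rpow_neg hn0.le, hAA]
    rw [h13, h23]
    field_simp

private lemma D_zero : Tendsto (fun n : ℕ =>
    (n : ℝ) * (n : ℝ) ^ ((3 : ℝ) * (n : ℝ) ^ ((2 : ℝ) / 3)) / 2 ^ (n - 1)) atTop (nhds 0) := by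
  set D := fun n : ℕ => (n : ℝ) * (n : ℝ) ^ ((3 : ℝ) * (n : ℝ) ^ ((2 : ℝ) / 3)) / 2 ^ (n - 1)
    with hD
  have hlog : Tendsto (fun n : ℕ => Real.log n / (n : ℝ) ^ ((1 : ℝ) / 3)) atTop (nhds 0) :=
    ((isLittleO_log_rpow_atTop (by norm_num : (0:ℝ) < 1/3)).tendsto_div_nhds_zero).comp
      tendsto_natCast_atTop_atTop
  have hg : Tendsto (fun n : ℕ => 4 * (Real.log n / (n : ℝ) ^ ((1 : ℝ) / 3)) - Real.log 2)
      atTop (nhds (-Real.log 2)) := by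
    have := (hlog.const_mul 4).sub_const (Real.log 2)
    simpa using this
  have hR : Tendsto (fun n : ℕ =>
      (n : ℝ) * (4 * (Real.log n / (n : ℝ) ^ ((1 : ℝ) / 3)) - Real.log 2) + Real.log 2)
      atTop atBot := by
    apply tendsto_atBot_add_const_right
    exact tendsto_natCast_atTop_atTop.atTop_mul_neg
      (neg_lt_zero.mpr (Real.log_pos one_lt_two)) hg
  have hL : Tendsto (fun n : ℕ => Real.log (D n)) atTop atBot := by
    refine tendsto_atBot_mono' atTop ?_ hR
    filter_upwards [eventually_ge_atTop 2,
      (rpow_nat_atTop (by norm_num : (0:ℝ) < 2/3)).eventually_ge_atTop 1] with n hn2 h23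
    have hn1 : 1 ≤ n := le_trans (by norm_num) hn2
    have hn0 : (0:ℝ) < (n : ℝ) := by exact_mod_cast lt_of_lt_of_le zero_lt_one hn1
    have hlogn : 0 ≤ Real.log n := Real.log_nonneg (by exact_mod_cast hn1)
    have hlog2 : 0 < Real.log 2 := Real.log_pos one_lt_two
    have hDeq : Real.log (D n)
        = Real.log n + (3 * (n : ℝ) ^ ((2 : ℝ) / 3)) * Real.log n
          - ((n : ℕ) - 1 : ℕ) * Real.log 2 := by
      rw [hD]
      rw [Real.log_div (by positivity) (by positivity), Real.log_mul (by positivity)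
        (by positivity), Real.log_rpow hn0, Real.log_pow]
    have hdiv : (n : ℝ) / (n : ℝ) ^ ((1 : ℝ) / 3) = (n : ℝ) ^ ((2 : ℝ) / 3) := by
      rw [show ((2:ℝ)/3) = 1 - (1:ℝ)/3 by norm_num, rpow_sub hn0, rpow_one]
    have hRe : (n : ℝ) * (4 * (Real.log n / (n : ℝ) ^ ((1 : ℝ) / 3)) - Real.log 2) + Real.log 2
        = 4 * (n : ℝ) ^ ((2 : ℝ) / 3) * Real.log n - ((n : ℝ) - 1) * Real.log 2 := by
      rw [← hdiv]; ring
    have hcast : (((n : ℕ) - 1 : ℕ) : ℝ) = (n : ℝ) - 1 := by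
      push_cast [Nat.cast_sub hn1]; ring
    rw [hDeq, hRe, hcast]
    nlinarith [mul_nonneg (sub_nonneg.mpr h23) hlogn]
  have hcmp := Real.tendsto_exp_atBot.comp hL
  refine hcmp.congr' ?_
  filter_upwards [eventually_ge_atTop 1] with n hn1
  have hn0 : (0:ℝ) < (n : ℝ) := by exact_mod_cast lt_of_lt_of_le zero_lt_one hn1
  have hDpos : 0 < D n := by rw [hD]; positivity
  exact Real.exp_log hDpos

private lemma choose_ratio (t : ℕ) (ht : 0 < t) (k m : ℕ) :
    ((k + t - 1).choose t : ℝ) / ((k + m + 3 * t - 1).choose t : ℝ)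
      = ∏ i ∈ Finset.range t,
          (((k : ℝ) + ((t - 1 - i : ℕ) : ℝ)) /
           ((k : ℝ) + ((t - 1 - i : ℕ) : ℝ) + ((m : ℝ) + 2 * t))) := by
  have hfac : ((t.factorial : ℕ) : ℝ) ≠ 0 := by
    exact_mod_cast t.factorial_ne_zero
  have h1 : (k + t - 1).descFactorial t = ∏ i ∈ Finset.range t, (k + (t - 1 - i)) := by
    rw [Nat.descFactorial_eq_prod_range]
    exact Finset.prod_congr rfl fun i hi => by
      have := Finset.mem_range.mp hi; omega
  have h2 : (k + m + 3 * t - 1).descFactorial t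
      = ∏ i ∈ Finset.range t, (k + (t - 1 - i) + (m + 2 * t)) := by
    rw [Nat.descFactorial_eq_prod_range]
    exact Finset.prod_congr rfl fun i hi => by
      have := Finset.mem_range.mp hi; omega
  have key : ((k + t - 1).choose t : ℝ) / ((k + m + 3 * t - 1).choose t : ℝ)
      = ((∏ i ∈ Finset.range t, (k + (t - 1 - i)) : ℕ) : ℝ) /
        ((∏ i ∈ Finset.range t, (k + (t - 1 - i) + (m + 2 * t)) : ℕ) : ℝ) := by
    rw [← h1, ← h2, Nat.descFactorial_eq_factorial_mul_choose,
      Nat.descFactorial_eq_factorial_mul_choose]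
    push_cast
    rw [mul_div_mul_left _ _ hfac]
  rw [key, Finset.prod_div_distrib]
  congr 1 <;>
  · rw [Nat.cast_prod]
    exact Finset.prod_congr rfl fun i _ => by push_cast; ring

end Aux


section Main
open Filter Finset Real

set_option maxHeartbeats 1000000 in
/-- The lower-bound function `l` is asymptotically `t!·2^n/n^t`. -/
theorem lower_bound_asymptotic (t : ℕ) (ht : 0 < t) (l : ℕ → ℝ)
    (hl : ∀ n : ℕ, 0 < n → l n =
      ((2 : ℝ) ^ n / ((n - 1).choose t : ℝ)) *
      (((⌊(n : ℝ) ^ ((1 : ℝ) / 3)⌋₊ : ℝ) + 1) / ((⌊(n : ℝ) ^ ((1 : ℝ) / 3)⌋₊ : ℝ) + 1 + 2 * t)) *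
      (((⌊(n : ℝ) ^ ((2 : ℝ) / 3)⌋₊ + t - 1).choose t : ℝ) /
        ((⌊(n : ℝ) ^ ((2 : ℝ) / 3)⌋₊ + ⌊(n : ℝ) ^ ((1 : ℝ) / 3)⌋₊ + 3 * t - 1).choose t : ℝ)) *
      (1
        - ∑ r ∈ Finset.range (⌊(n : ℝ) ^ ((1 : ℝ) / 3)⌋₊ - 1 + ⌊(n : ℝ) ^ ((2 : ℝ) / 3)⌋₊ + t),
            ((n - 1).choose r : ℝ) / 2 ^ (n - 1)
        - ∑ r ∈ Finset.Icc (n - 1 - ⌊(n : ℝ) ^ ((2 : ℝ) / 3)⌋₊ + t + 1) (n - 1),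
            ((n - 1).choose r : ℝ) / 2 ^ (n - 1))) :
    Tendsto (fun n : ℕ => l n * (n : ℝ) ^ t / ((t.factorial : ℝ) * 2 ^ n)) atTop (nhds 1) := by
  classical
  set F1 : ℕ → ℝ := fun n => (n : ℝ) ^ t / ((t.factorial : ℝ) * ((n - 1).choose t : ℝ)) with hF1
  set F2 : ℕ → ℝ := fun n => ((mf n : ℝ) + 1) / ((mf n : ℝ) + 1 + 2 * t) with hF2
  set F3 : ℕ → ℝ := fun n =>
    ((kf n + t - 1).choose t : ℝ) / ((kf n + mf n + 3 * t - 1).choose t : ℝ) with hF3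
  set S1 : ℕ → ℝ := fun n =>
    ∑ r ∈ Finset.range (mf n - 1 + kf n + t), ((n - 1).choose r : ℝ) / 2 ^ (n - 1) with hS1def
  set S2 : ℕ → ℝ := fun n =>
    ∑ r ∈ Finset.Icc (n - 1 - kf n + t + 1) (n - 1), ((n - 1).choose r : ℝ) / 2 ^ (n - 1)
    with hS2def
  -- Tendency of F1
  have hT1 : Tendsto F1 atTop (nhds 1) := by
    have hfac : ∀ i ∈ Finset.range t,
        Tendsto (fun n : ℕ => (n : ℝ) / ((n : ℝ) - 1 - (i : ℝ))) atTop (nhds 1) := by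
      intro i _
      have hv : Tendsto (fun n : ℕ => (-(1 + (i : ℝ))) / (n : ℝ)) atTop (nhds 0) :=
        tendsto_const_nhds.div_atTop tendsto_natCast_atTop_atTop
      have := aux_ratio (u := fun n : ℕ => (n : ℝ)) (v := fun _ => -(1 + (i : ℝ)))
        tendsto_natCast_atTop_atTop hv
      refine this.congr fun n => ?_
      rw [show (n : ℝ) + -(1 + (i : ℝ)) = (n : ℝ) - 1 - (i : ℝ) by ring]
    have hprod := tendsto_finset_prod (Finset.range t) hfac
    have hprod1 : Tendsto (fun n : ℕ =>
        ∏ i ∈ Finset.range t, ((n : ℝ) / ((n : ℝ) - 1 - (i : ℝ)))) atTop (nhds 1) := by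
      simpa using hprod
    refine hprod1.congr' ?_
    filter_upwards [eventually_ge_atTop (t + 1)] with n hn
    rw [hF1]
    have h1 : t.factorial * ((n - 1).choose t) = ∏ i ∈ Finset.range t, (n - 1 - i) := by
      rw [← Nat.descFactorial_eq_factorial_mul_choose, Nat.descFactorial_eq_prod_range]
    have h2 : ((∏ i ∈ Finset.range t, (n - 1 - i) : ℕ) : ℝ)
        = ∏ i ∈ Finset.range t, ((n : ℝ) - 1 - (i : ℝ)) := by
      rw [Nat.cast_prod]
      refine Finset.prod_congr rfl fun i hi => ?_
      have hi' := Finset.mem_range.mp hi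
      rw [show n - 1 - i = n - (i + 1) by omega, Nat.cast_sub (by omega)]
      push_cast
      ring
    calc (∏ i ∈ Finset.range t, ((n : ℝ) / ((n : ℝ) - 1 - (i : ℝ))))
        = (∏ _i ∈ Finset.range t, (n : ℝ)) / ∏ i ∈ Finset.range t, ((n : ℝ) - 1 - (i : ℝ)) :=
          Finset.prod_div_distrib _ _
      _ = (n : ℝ) ^ t / ((t.factorial : ℝ) * ((n - 1).choose t : ℝ)) := by
          rw [Finset.prod_const, Finset.card_range, ← h2, ← h1]
          push_cast
          ring
  -- Tendency of F2
  have hT2 : Tendsto F2 atTop (nhds 1) := by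
    have hu : Tendsto (fun n : ℕ => (mf n : ℝ) + 1) atTop atTop :=
      tendsto_atTop_add_const_right _ 1 (tendsto_natCast_atTop_atTop.comp mf_atTop)
    have hv : Tendsto (fun n : ℕ => (2 * t : ℝ) / ((mf n : ℝ) + 1)) atTop (nhds 0) :=
      tendsto_const_nhds.div_atTop hu
    have := aux_ratio hu hv
    refine this.congr fun n => ?_
    rw [hF2]
  -- Tendency of F3
  have hT3 : Tendsto F3 atTop (nhds 1) := by
    have hfac : ∀ i ∈ Finset.range t,
        Tendsto (fun n : ℕ =>
          (((kf n : ℝ) + ((t - 1 - i : ℕ) : ℝ)) /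
           ((kf n : ℝ) + ((t - 1 - i : ℕ) : ℝ) + ((mf n : ℝ) + 2 * t)))) atTop (nhds 1) := by
      intro i _
      have hu : Tendsto (fun n : ℕ => (kf n : ℝ) + ((t - 1 - i : ℕ) : ℝ)) atTop atTop :=
        tendsto_atTop_add_const_right _ _ (tendsto_natCast_atTop_atTop.comp kf_atTop)
      have hv : Tendsto (fun n : ℕ =>
          ((mf n : ℝ) + 2 * t) / ((kf n : ℝ) + ((t - 1 - i : ℕ) : ℝ))) atTop (nhds 0) := by
        have := quot_zero ((t - 1 - i : ℕ) : ℝ) (2 * t) (Nat.cast_nonneg _) (by positivity)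
        exact this.congr fun n => by norm_num
      exact aux_ratio hu hv
    have hprod := tendsto_finset_prod (Finset.range t) hfac
    have hprod1 : Tendsto (fun n : ℕ => ∏ i ∈ Finset.range t,
        (((kf n : ℝ) + ((t - 1 - i : ℕ) : ℝ)) /
         ((kf n : ℝ) + ((t - 1 - i : ℕ) : ℝ) + ((mf n : ℝ) + 2 * t)))) atTop (nhds 1) := by
      simpa using hprod
    refine hprod1.congr fun n => ?_
    exact (choose_ratio t ht (kf n) (mf n)).symm
  -- the common eventual bounds
  have hev3 : ∀ᶠ n : ℕ in atTop, (3 : ℝ) ≤ (n : ℝ) ^ ((1 : ℝ) / 3) :=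
    (rpow_nat_atTop (by norm_num)).eventually_ge_atTop 3
  have hevt : ∀ᶠ n : ℕ in atTop, (t : ℝ) ≤ (n : ℝ) ^ ((2 : ℝ) / 3) :=
    (rpow_nat_atTop (by norm_num)).eventually_ge_atTop t
  -- S1 → 0
  have hS1 : Tendsto S1 atTop (nhds 0) := by
    refine squeeze_zero' ?_ ?_ D_zero
    · filter_upwards [] with n
      rw [hS1def]
      positivity
    · filter_upwards [hev3, hevt, eventually_ge_atTop 2] with n h3 htn h2n
      have hn1R : (1 : ℝ) ≤ (n : ℝ) := by exact_mod_cast Nat.one_le_of_lt h2n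
      have hn0 : (0 : ℝ) < (n : ℝ) := by linarith
      have hmul : (n : ℝ) ^ ((1 : ℝ) / 3) * (n : ℝ) ^ ((2 : ℝ) / 3) = (n : ℝ) := by
        rw [← rpow_add hn0, show (1 : ℝ) / 3 + 2 / 3 = 1 by norm_num, rpow_one]
      have h23pos : (0 : ℝ) < (n : ℝ) ^ ((2 : ℝ) / 3) := rpow_pos_of_pos hn0 _
      have h13le : (n : ℝ) ^ ((1 : ℝ) / 3) ≤ (n : ℝ) ^ ((2 : ℝ) / 3) :=
        rpow_le_rpow_of_exponent_le hn1R (by norm_num)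
      set sN := mf n - 1 + kf n + t with hsN
      have hchain : ((sN : ℕ) : ℝ) ≤ 3 * (n : ℝ) ^ ((2 : ℝ) / 3) := by
        have hle : ((sN : ℕ) : ℝ) ≤ (mf n : ℝ) + (kf n : ℝ) + (t : ℝ) := by
          have : (sN : ℕ) ≤ mf n + kf n + t := by omega
          exact_mod_cast this
        have := mf_le n
        have := kf_le n
        linarith
      have hsn : (sN : ℝ) ≤ (n : ℝ) := by
        nlinarith [h3, h23pos, hmul]
      have hsnN : sN ≤ n := by exact_mod_cast hsn
      have hterm : ∀ r ∈ Finset.range sN,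
          ((n - 1).choose r : ℝ) / 2 ^ (n - 1) ≤ ((n ^ sN : ℕ) : ℝ) / 2 ^ (n - 1) := by
        intro r hr
        have hr' := Finset.mem_range.mp hr
        have hc : (n - 1).choose r ≤ n ^ sN := by
          calc (n - 1).choose r ≤ (n - 1) ^ r := Nat.choose_le_pow _ _
            _ ≤ n ^ r := Nat.pow_le_pow_left (by omega) _
            _ ≤ n ^ sN := Nat.pow_le_pow_right (by omega) (by omega)
        gcongr

      calc S1 n ≤ ∑ _r ∈ Finset.range sN, ((n ^ sN : ℕ) : ℝ) / 2 ^ (n - 1) := by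
            rw [hS1def]
            exact Finset.sum_le_sum hterm
        _ = (sN : ℝ) * (((n ^ sN : ℕ) : ℝ) / 2 ^ (n - 1)) := by
            rw [Finset.sum_const, Finset.card_range, nsmul_eq_mul]
        _ ≤ (n : ℝ) * ((n : ℝ) ^ ((3 : ℝ) * (n : ℝ) ^ ((2 : ℝ) / 3)) / 2 ^ (n - 1)) := by
            have hpow : ((n ^ sN : ℕ) : ℝ) ≤ (n : ℝ) ^ ((3 : ℝ) * (n : ℝ) ^ ((2 : ℝ) / 3)) := by
              have : ((n ^ sN : ℕ) : ℝ) = (n : ℝ) ^ ((sN : ℕ) : ℝ) := by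
                push_cast
                rw [rpow_natCast]
              rw [this]
              exact rpow_le_rpow_of_exponent_le hn1R hchain
            have hdiv2 : ((n ^ sN : ℕ) : ℝ) / 2 ^ (n - 1)
                ≤ (n : ℝ) ^ ((3 : ℝ) * (n : ℝ) ^ ((2 : ℝ) / 3)) / 2 ^ (n - 1) := by gcongr
            exact mul_le_mul hsn hdiv2 (by positivity) (by positivity)
        _ = (n : ℝ) * (n : ℝ) ^ ((3 : ℝ) * (n : ℝ) ^ ((2 : ℝ) / 3)) / 2 ^ (n - 1) := by ring
  -- S2 → 0
  have hS2 : Tendsto S2 atTop (nhds 0) := by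
    refine squeeze_zero' ?_ ?_ D_zero
    · filter_upwards [] with n
      rw [hS2def]
      positivity
    · filter_upwards [hev3, hevt, eventually_ge_atTop 2] with n h3 htn h2n
      have hn1R : (1 : ℝ) ≤ (n : ℝ) := by exact_mod_cast Nat.one_le_of_lt h2n
      have hn0 : (0 : ℝ) < (n : ℝ) := by linarith
      have hmul : (n : ℝ) ^ ((1 : ℝ) / 3) * (n : ℝ) ^ ((2 : ℝ) / 3) = (n : ℝ) := by
        rw [← rpow_add hn0, show (1 : ℝ) / 3 + 2 / 3 = 1 by norm_num, rpow_one]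
      have h23pos : (0 : ℝ) < (n : ℝ) ^ ((2 : ℝ) / 3) := rpow_pos_of_pos hn0 _
      have h3k : (3 : ℝ) * (kf n : ℝ) ≤ (n : ℝ) := by
        nlinarith [kf_le n, h3, h23pos, hmul, (by positivity : (0:ℝ) ≤ ((kf n : ℕ) : ℝ))]
      have h3kN : 3 * kf n ≤ n := by exact_mod_cast h3k
      have hterm : ∀ r ∈ Finset.Icc (n - 1 - kf n + t + 1) (n - 1),
          ((n - 1).choose r : ℝ) / 2 ^ (n - 1) ≤ ((n ^ kf n : ℕ) : ℝ) / 2 ^ (n - 1) := by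
        intro r hr
        obtain ⟨hr1, hr2⟩ := Finset.mem_Icc.mp hr
        have hc : (n - 1).choose r ≤ n ^ kf n := by
          calc (n - 1).choose r = (n - 1).choose (n - 1 - r) := (Nat.choose_symm hr2).symm
            _ ≤ (n - 1) ^ (n - 1 - r) := Nat.choose_le_pow _ _
            _ ≤ n ^ (n - 1 - r) := Nat.pow_le_pow_left (by omega) _
            _ ≤ n ^ kf n := Nat.pow_le_pow_right (by omega) (by omega)
        gcongr

      have hcard : ((Finset.Icc (n - 1 - kf n + t + 1) (n - 1)).card : ℝ) ≤ (n : ℝ) := by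
        rw [Nat.card_Icc]
        exact_mod_cast (by omega : n - 1 + 1 - (n - 1 - kf n + t + 1) ≤ n)
      have hkchain : ((kf n : ℕ) : ℝ) ≤ 3 * (n : ℝ) ^ ((2 : ℝ) / 3) := by
        have := kf_le n
        linarith
      calc S2 n ≤ ((Finset.Icc (n - 1 - kf n + t + 1) (n - 1)).card : ℕ) •
            (((n ^ kf n : ℕ) : ℝ) / 2 ^ (n - 1)) := by
            rw [hS2def]
            exact Finset.sum_le_card_nsmul _ _ _ hterm
        _ = ((Finset.Icc (n - 1 - kf n + t + 1) (n - 1)).card : ℝ) *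
            (((n ^ kf n : ℕ) : ℝ) / 2 ^ (n - 1)) := nsmul_eq_mul _ _
        _ ≤ (n : ℝ) * ((n : ℝ) ^ ((3 : ℝ) * (n : ℝ) ^ ((2 : ℝ) / 3)) / 2 ^ (n - 1)) := by
            have hpow : ((n ^ kf n : ℕ) : ℝ) ≤ (n : ℝ) ^ ((3 : ℝ) * (n : ℝ) ^ ((2 : ℝ) / 3)) := by
              have : ((n ^ kf n : ℕ) : ℝ) = (n : ℝ) ^ ((kf n : ℕ) : ℝ) := by
                push_cast
                rw [rpow_natCast]
              rw [this]
              exact rpow_le_rpow_of_exponent_le hn1R hkchain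
            have hdiv2 : ((n ^ kf n : ℕ) : ℝ) / 2 ^ (n - 1)
                ≤ (n : ℝ) ^ ((3 : ℝ) * (n : ℝ) ^ ((2 : ℝ) / 3)) / 2 ^ (n - 1) := by gcongr
            exact mul_le_mul hcard hdiv2 (by positivity) (by positivity)
        _ = (n : ℝ) * (n : ℝ) ^ ((3 : ℝ) * (n : ℝ) ^ ((2 : ℝ) / 3)) / 2 ^ (n - 1) := by ring
  -- F4 → 1
  have hT4 : Tendsto (fun n => 1 - S1 n - S2 n) atTop (nhds 1) := by
    have := (tendsto_const_nhds (x := (1 : ℝ)) (f := atTop)).sub hS1 |>.sub hS2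
    simpa using this
  have hmain : Tendsto (fun n => F1 n * F2 n * F3 n * (1 - S1 n - S2 n)) atTop (nhds 1) := by
    have := ((hT1.mul hT2).mul hT3).mul hT4
    simpa using this
  refine hmain.congr' ?_
  filter_upwards [eventually_ge_atTop (t + 1)] with n hn
  have hn0 : 0 < n := by omega
  have hX : (0 : ℝ) < ((n - 1).choose t : ℝ) := by
    exact_mod_cast Nat.choose_pos (by omega : t ≤ n - 1)
  have h2n : ((2 : ℝ) ^ n) ≠ 0 := by positivity
  have hfacpos : (0 : ℝ) < (t.factorial : ℝ) := by exact_mod_cast t.factorial_pos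
  rw [hl n hn0]
  have e2 : ((⌊(n : ℝ) ^ ((1 : ℝ) / 3)⌋₊ : ℝ) + 1) / ((⌊(n : ℝ) ^ ((1 : ℝ) / 3)⌋₊ : ℝ) + 1 + 2 * t)
      = F2 n := rfl
  have e3 : (((⌊(n : ℝ) ^ ((2 : ℝ) / 3)⌋₊ + t - 1).choose t : ℝ) /
        ((⌊(n : ℝ) ^ ((2 : ℝ) / 3)⌋₊ + ⌊(n : ℝ) ^ ((1 : ℝ) / 3)⌋₊ + 3 * t - 1).choose t : ℝ))
      = F3 n := rfl
  have eS1 : (∑ r ∈ Finset.range (⌊(n : ℝ) ^ ((1 : ℝ) / 3)⌋₊ - 1 + ⌊(n : ℝ) ^ ((2 : ℝ) / 3)⌋₊ + t),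
      ((n - 1).choose r : ℝ) / 2 ^ (n - 1)) = S1 n := rfl
  have eS2 : (∑ r ∈ Finset.Icc (n - 1 - ⌊(n : ℝ) ^ ((2 : ℝ) / 3)⌋₊ + t + 1) (n - 1),
      ((n - 1).choose r : ℝ) / 2 ^ (n - 1)) = S2 n := rfl
  rw [e2, e3, eS1, eS2]
  have key : (2 : ℝ) ^ n / ((n - 1).choose t : ℝ) * ((n : ℝ) ^ t / ((t.factorial : ℝ) * 2 ^ n))
      = F1 n := by
    rw [hF1]
    field_simp
  calc F1 n * F2 n * F3 n * (1 - S1 n - S2 n)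
      = (2 : ℝ) ^ n / ((n - 1).choose t : ℝ) * ((n : ℝ) ^ t / ((t.factorial : ℝ) * 2 ^ n)) *
        (F2 n * F3 n * (1 - S1 n - S2 n)) := by rw [key]; ring
    _ = (2 : ℝ) ^ n / ((n - 1).choose t : ℝ) * F2 n * F3 n * (1 - S1 n - S2 n) * (n : ℝ) ^ t /
        ((t.factorial : ℝ) * 2 ^ n) := by ring

end Main
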